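/- For the linear control system ẋ = Ax + Bu with cost J_T(u) = ½∫₀ᵀ|u(s)|²ds, under the Kalman condition, the unique initial covector p₀ for the Hamiltonian extremal connecting x₁ to x₂ in time T is p₀ = Γ_T⁻¹(e^{-TA}x₂ - x₁), i.e., the extremal x(t) = e^{tA}(x₁ + Γ_t p₀) satisfies x(0) = x₁ and x(T) = x₂, and p₀ is the only covector with this property. -/

import Mathlib

open Matrix

/-- The controllability Gramian `Γ_t = ∫₀ᵗ e^{-τA} B Bᵀ e^{-τAᵀ} dτ` (entrywise integral). -/
noncomputable def Gram {n k : ℕ} (A : Matrix (Fin n) (Fin n) ℝ) (B : Matrix (Fin n) (Fin k) ℝ)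
    (t : ℝ) : Matrix (Fin n) (Fin n) ℝ :=
  fun i j => ∫ τ in (0:ℝ)..t,
    (NormedSpace.exp (-τ • A) * B * Bᵀ * NormedSpace.exp (-τ • Aᵀ)) i j

section Aux

attribute [local instance] Matrix.linftyOpNormedRing Matrix.linftyOpNormedAlgebra

open MeasureTheory intervalIntegral

variable {n k : ℕ} (A : Matrix (Fin n) (Fin n) ℝ) (B : Matrix (Fin n) (Fin k) ℝ)

lemma exp_cont (C : Matrix (Fin n) (Fin n) ℝ) :
    Continuous fun τ : ℝ => NormedSpace.exp (τ • C) :=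
  continuous_iff_continuousAt.2 fun τ => (hasDerivAt_exp_smul_const C τ).continuousAt

lemma neg_smul_eq (τ : ℝ) (C : Matrix (Fin n) (Fin n) ℝ) : -τ • C = τ • (-C) := by
  rw [neg_smul, smul_neg]

lemma integrand_cont (i j : Fin n) :
    Continuous fun τ : ℝ =>
      (NormedSpace.exp (-τ • A) * B * Bᵀ * NormedSpace.exp (-τ • Aᵀ)) i j := by
  have h1 : Continuous fun τ : ℝ => NormedSpace.exp (-τ • A) := by
    simpa only [neg_smul_eq] using exp_cont (-A)
  have h2 : Continuous fun τ : ℝ => NormedSpace.exp (-τ • Aᵀ) := by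
    simpa only [neg_smul_eq] using exp_cont (-Aᵀ)
  have : Continuous fun τ : ℝ =>
      (NormedSpace.exp (-τ • A) * B * Bᵀ * NormedSpace.exp (-τ • Aᵀ)) :=
    (((h1.matrix_mul continuous_const).matrix_mul continuous_const).matrix_mul h2)
  exact (continuous_apply j).comp ((continuous_apply i).comp this)

lemma quad_form (T : ℝ) (x : Fin n → ℝ) :
    x ⬝ᵥ (Gram A B T *ᵥ x) = ∫ τ in (0:ℝ)..T,
      ((Bᵀ * NormedSpace.exp (-τ • Aᵀ)) *ᵥ x) ⬝ᵥ ((Bᵀ * NormedSpace.exp (-τ • Aᵀ)) *ᵥ x) := by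
  have key1 : ∀ τ : ℝ,
      x ⬝ᵥ ((NormedSpace.exp (-τ • A) * B * Bᵀ * NormedSpace.exp (-τ • Aᵀ)) *ᵥ x)
      = ((Bᵀ * NormedSpace.exp (-τ • Aᵀ)) *ᵥ x) ⬝ᵥ ((Bᵀ * NormedSpace.exp (-τ • Aᵀ)) *ᵥ x) := by
    intro τ
    have hE : NormedSpace.exp (-τ • Aᵀ) = (NormedSpace.exp (-τ • A))ᵀ := by
      rw [← transpose_smul, Matrix.exp_transpose]
    set E := NormedSpace.exp (-τ • A) with hEdef
    have hN : Bᵀ * NormedSpace.exp (-τ • Aᵀ) = (E * B)ᵀ := by rw [hE, transpose_mul]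
    have hM : E * B * Bᵀ * NormedSpace.exp (-τ • Aᵀ) = (E * B) * (E * B)ᵀ := by
      rw [hE, transpose_mul]; exact Matrix.mul_assoc _ _ _
    rw [hN, hM, ← Matrix.mulVec_mulVec, dotProduct_mulVec, ← mulVec_transpose]
  have key2 : ∀ (M : Matrix (Fin n) (Fin n) ℝ), x ⬝ᵥ (M *ᵥ x) = ∑ i, ∑ j, x i * (M i j * x j) := by
    intro M; simp [dotProduct, mulVec, Finset.mul_sum]
  have hint : ∀ i j : Fin n, IntervalIntegrable (fun τ => x i *
        ((NormedSpace.exp (-τ • A) * B * Bᵀ * NormedSpace.exp (-τ • Aᵀ)) i j * x j))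
      volume 0 T :=
    fun i j => (continuous_const.mul ((integrand_cont A B i j).mul continuous_const)).intervalIntegrable _ _
  calc x ⬝ᵥ (Gram A B T *ᵥ x)
      = ∑ i, ∑ j, x i * ((Gram A B T) i j * x j) := key2 _
    _ = ∑ i, ∑ j, ∫ τ in (0:ℝ)..T, x i *
          ((NormedSpace.exp (-τ • A) * B * Bᵀ * NormedSpace.exp (-τ • Aᵀ)) i j * x j) := by
        refine Finset.sum_congr rfl fun i _ => Finset.sum_congr rfl fun j _ => ?_
        rw [show (Gram A B T) i j = ∫ τ in (0:ℝ)..T,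
            (NormedSpace.exp (-τ • A) * B * Bᵀ * NormedSpace.exp (-τ • Aᵀ)) i j from rfl,
          ← intervalIntegral.integral_mul_const, ← intervalIntegral.integral_const_mul]
    _ = ∫ τ in (0:ℝ)..T, ∑ i, ∑ j, x i *
          ((NormedSpace.exp (-τ • A) * B * Bᵀ * NormedSpace.exp (-τ • Aᵀ)) i j * x j) := by
        have h1 : ∀ i : Fin n, (∑ j, ∫ τ in (0:ℝ)..T, x i *
            ((NormedSpace.exp (-τ • A) * B * Bᵀ * NormedSpace.exp (-τ • Aᵀ)) i j * x j))
            = ∫ τ in (0:ℝ)..T, ∑ j, x i *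
            ((NormedSpace.exp (-τ • A) * B * Bᵀ * NormedSpace.exp (-τ • Aᵀ)) i j * x j) :=
          fun i => (intervalIntegral.integral_finset_sum (fun j _ => hint i j)).symm
        rw [Finset.sum_congr rfl fun i _ => h1 i]
        refine (intervalIntegral.integral_finset_sum (fun i _ => ?_)).symm
        exact ((continuous_finset_sum _ fun j _ => continuous_const.mul
          ((integrand_cont A B i j).mul continuous_const))).intervalIntegrable _ _
    _ = _ := by
        refine intervalIntegral.integral_congr fun τ _ => ?_
        rw [← key2, key1]

lemma deriv_vanish (x : Fin n → ℝ) (T : ℝ)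
    (h0 : ∀ τ ∈ Set.Ioo (0:ℝ) T, (Bᵀ * NormedSpace.exp (-τ • Aᵀ)) *ᵥ x = 0) :
    ∀ m : ℕ, ∀ τ ∈ Set.Ioo (0:ℝ) T,
      (Bᵀ * (-Aᵀ) ^ m * NormedSpace.exp (τ • (-Aᵀ))) *ᵥ x = 0 := by
  intro m
  induction m with
  | zero =>
    intro τ hτ
    simpa [← neg_smul_eq] using h0 τ hτ
  | succ m ih =>
    intro τ hτ
    -- the linear map E ↦ (Bᵀ * (-Aᵀ)^m * E) *ᵥ x, as a continuous linear map
    let L₀ : Matrix (Fin n) (Fin n) ℝ →ₗ[ℝ] (Fin k → ℝ) :=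
      { toFun := fun E => (Bᵀ * (-Aᵀ) ^ m * E) *ᵥ x
        map_add' := fun E F => by simp [Matrix.mul_add, Matrix.add_mulVec]
        map_smul' := fun c E => by simp [Matrix.mul_smul, Matrix.smul_mulVec] }
    let L : Matrix (Fin n) (Fin n) ℝ →L[ℝ] (Fin k → ℝ) := L₀.toContinuousLinearMap
    have hd : HasDerivAt (fun u : ℝ => (Bᵀ * (-Aᵀ) ^ m * NormedSpace.exp (u • (-Aᵀ))) *ᵥ x)
        ((Bᵀ * (-Aᵀ) ^ (m + 1) * NormedSpace.exp (τ • (-Aᵀ))) *ᵥ x) τ := by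
      have hcomp := (L.hasFDerivAt (x := NormedSpace.exp (τ • (-Aᵀ)))).comp_hasDerivAt τ
        (hasDerivAt_exp_smul_const' (-Aᵀ) τ)
      have : L ((-Aᵀ) * NormedSpace.exp (τ • (-Aᵀ)))
          = (Bᵀ * (-Aᵀ) ^ (m + 1) * NormedSpace.exp (τ • (-Aᵀ))) *ᵥ x := by
        show (Bᵀ * (-Aᵀ) ^ m * ((-Aᵀ) * NormedSpace.exp (τ • (-Aᵀ)))) *ᵥ x = _
        rw [pow_succ, ← Matrix.mul_assoc, ← Matrix.mul_assoc]
      exact hcomp.congr_deriv this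
    have heq : (fun u : ℝ => (Bᵀ * (-Aᵀ) ^ m * NormedSpace.exp (u • (-Aᵀ))) *ᵥ x)
        =ᶠ[nhds τ] fun _ => (0 : Fin k → ℝ) := by
      filter_upwards [isOpen_Ioo.mem_nhds hτ] with s hs using ih s hs
    have hzero : HasDerivAt (fun u : ℝ => (Bᵀ * (-Aᵀ) ^ m * NormedSpace.exp (u • (-Aᵀ))) *ᵥ x)
        0 τ := (hasDerivAt_const τ (0 : Fin k → ℝ)).congr_of_eventuallyEq heq
    exact (hd.unique hzero)


lemma gram_posdef
    (hKalman : Submodule.span ℝ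
      {v : Fin n → ℝ | ∃ j < n, ∃ u : Fin k → ℝ, v = (A ^ j * B) *ᵥ u} = ⊤)
    (T : ℝ) (hT : 0 < T) : (Gram A B T).PosDef := by
  have hMsym : ∀ τ : ℝ,
      (NormedSpace.exp (-τ • A) * B * Bᵀ * NormedSpace.exp (-τ • Aᵀ))ᵀ
      = NormedSpace.exp (-τ • A) * B * Bᵀ * NormedSpace.exp (-τ • Aᵀ) := by
    intro τ
    have hE : NormedSpace.exp (-τ • Aᵀ) = (NormedSpace.exp (-τ • A))ᵀ := by
      rw [← transpose_smul, Matrix.exp_transpose]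
    rw [hE]
    simp [transpose_mul, Matrix.mul_assoc]
  refine posDef_iff_dotProduct_mulVec.2 ⟨?_, ?_⟩
  · show (Gram A B T)ᴴ = Gram A B T
    rw [conjTranspose_eq_transpose_of_trivial]
    ext i j
    show (Gram A B T) j i = (Gram A B T) i j
    show (∫ τ in (0:ℝ)..T, _) = ∫ τ in (0:ℝ)..T, _
    refine intervalIntegral.integral_congr fun τ _ => ?_
    exact congrFun (congrFun (hMsym τ) i) j
  · intro x hx
    have hstar : star x = x := funext fun i => star_trivial _
    rw [hstar]
    set F : ℝ → (Fin k → ℝ) := fun τ => (Bᵀ * NormedSpace.exp (-τ • Aᵀ)) *ᵥ x with hF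
    have hFcont : Continuous F := by
      have h2 : Continuous fun τ : ℝ => NormedSpace.exp (-τ • Aᵀ) := by
        simpa only [neg_smul_eq] using exp_cont (-Aᵀ)
      have h3 : Continuous fun τ : ℝ => Bᵀ * NormedSpace.exp (-τ • Aᵀ) :=
        Continuous.matrix_mul continuous_const h2
      refine continuous_pi fun i => ?_
      have hFi : (fun τ => F τ i)
          = fun τ => ∑ j, (Bᵀ * NormedSpace.exp (-τ • Aᵀ)) i j * x j := rfl
      rw [hFi]
      exact continuous_finset_sum _ fun j _ =>
        (((continuous_apply j).comp ((continuous_apply i).comp h3)).mul continuous_const)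
    have hgcont : Continuous fun τ => F τ ⬝ᵥ F τ := by
      simp only [dotProduct]
      exact continuous_finset_sum _ fun i _ =>
        ((continuous_apply i).comp hFcont).mul ((continuous_apply i).comp hFcont)
    have hnonneg : ∀ τ, 0 ≤ F τ ⬝ᵥ F τ := fun τ =>
      Finset.sum_nonneg fun i _ => mul_self_nonneg _
    have hQ := quad_form A B T x
    have hge : 0 ≤ x ⬝ᵥ (Gram A B T *ᵥ x) := by
      rw [hQ]
      exact intervalIntegral.integral_nonneg hT.le fun u _ => hnonneg u
    refine hge.lt_of_ne fun heq => hx ?_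
    -- the integral vanishes, hence F vanishes on (0, T)
    have hint0 : ∫ τ in (0:ℝ)..T, F τ ⬝ᵥ F τ = 0 := by rw [← hQ, ← heq]
    rw [intervalIntegral.integral_of_le hT.le] at hint0
    have hae : (fun τ => F τ ⬝ᵥ F τ) =ᵐ[volume.restrict (Set.Ioc 0 T)] 0 :=
      (MeasureTheory.integral_eq_zero_iff_of_nonneg_ae
        (Filter.Eventually.of_forall hnonneg)
        hgcont.integrableOn_Ioc).1 hint0
    have hae' : (fun τ => F τ ⬝ᵥ F τ) =ᵐ[volume.restrict (Set.Ioo 0 T)] 0 :=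
      MeasureTheory.ae_restrict_of_ae_restrict_of_subset Set.Ioo_subset_Ioc_self hae
    have hEqOn : Set.EqOn (fun τ => F τ ⬝ᵥ F τ) 0 (Set.Ioo 0 T) :=
      MeasureTheory.Measure.eqOn_open_of_ae_eq hae' isOpen_Ioo hgcont.continuousOn
        continuousOn_const
    have hF0 : ∀ τ ∈ Set.Ioo (0:ℝ) T, F τ = 0 := fun τ hτ =>
      dotProduct_self_eq_zero.1 (hEqOn hτ)
    have hvan := deriv_vanish A B x T hF0
    set τ₀ : ℝ := T / 2 with hτ₀
    have hτ₀mem : τ₀ ∈ Set.Ioo (0:ℝ) T := ⟨by positivity, by simp [hτ₀]; linarith⟩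
    set y : Fin n → ℝ := NormedSpace.exp (τ₀ • (-Aᵀ)) *ᵥ x with hy
    have hyvan : ∀ m : ℕ, (Bᵀ * (-Aᵀ) ^ m) *ᵥ y = 0 := fun m => by
      rw [hy, Matrix.mulVec_mulVec]
      exact hvan m τ₀ hτ₀mem
    have hyvan' : ∀ m : ℕ, (Bᵀ * Aᵀ ^ m) *ᵥ y = 0 := by
      intro m
      have hpow : (-Aᵀ) ^ m = ((-1 : ℝ) ^ m) • Aᵀ ^ m := by
        rw [← neg_one_smul ℝ Aᵀ, smul_pow]
      have h := hyvan m
      rw [hpow, Matrix.mul_smul, Matrix.smul_mulVec, smul_eq_zero] at h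
      rcases h with h | h
      · exact absurd h (pow_ne_zero _ (by norm_num))
      · exact h
    have hdot : ∀ v ∈ {v : Fin n → ℝ | ∃ j < n, ∃ u : Fin k → ℝ, v = (A ^ j * B) *ᵥ u},
        v ⬝ᵥ y = 0 := by
      rintro v ⟨j, hjn, u, rfl⟩
      rw [dotProduct_comm, dotProduct_mulVec, ← mulVec_transpose, transpose_mul,
        transpose_pow, hyvan' j, zero_dotProduct]
    have hW : ∀ v : Fin n → ℝ, v ⬝ᵥ y = 0 := by
      intro v
      let W : Submodule ℝ (Fin n → ℝ) :=
        { carrier := {v | v ⬝ᵥ y = 0}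
          add_mem' := fun {a b} ha hb => by
            simp only [Set.mem_setOf_eq] at *
            rw [add_dotProduct, ha, hb, add_zero]
          zero_mem' := by simp
          smul_mem' := fun c a ha => by
            simp only [Set.mem_setOf_eq] at *
            rw [smul_dotProduct, ha, smul_zero] }
      have hle : Submodule.span ℝ
          {v : Fin n → ℝ | ∃ j < n, ∃ u : Fin k → ℝ, v = (A ^ j * B) *ᵥ u} ≤ W :=
        Submodule.span_le.2 hdot
      rw [hKalman] at hle
      exact hle Submodule.mem_top
    have hy0 : y = 0 := dotProduct_self_eq_zero.1 (hW y)
    have hcomm : Commute (τ₀ • Aᵀ) (τ₀ • (-Aᵀ)) :=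
      (((Commute.refl Aᵀ).neg_right).smul_left τ₀).smul_right τ₀
    have hx0 : x = NormedSpace.exp (τ₀ • Aᵀ) *ᵥ y := by
      rw [hy, Matrix.mulVec_mulVec, ← Matrix.exp_add_of_commute _ _ hcomm, smul_neg,
        add_neg_cancel, NormedSpace.exp_zero, Matrix.one_mulVec]
    rw [hx0, hy0, Matrix.mulVec_zero]


/-- the unique initial covector for the extremal connecting `x₁` to `x₂`
in time `T` is `p₀ = Γ_T⁻¹ (e^{-TA} x₂ - x₁)`: the extremal
`x(t) = e^{tA}(x₁ + Γ_t p₀)` satisfies `x(0) = x₁`, `x(T) = x₂`, and `p₀` is the only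
covector with this property. -/
theorem extremal_initial_covector {n k : ℕ} (hk : 1 ≤ k) (hkn : k ≤ n)
    (A : Matrix (Fin n) (Fin n) ℝ) (B : Matrix (Fin n) (Fin k) ℝ)
    (hKalman : Submodule.span ℝ
      {v : Fin n → ℝ | ∃ j < n, ∃ x : Fin k → ℝ, v = (A ^ j * B) *ᵥ x} = ⊤)
    (T : ℝ) (hT : 0 < T) (x₁ x₂ : Fin n → ℝ) :
    (NormedSpace.exp ((0:ℝ) • A) *ᵥ
        (x₁ + Gram A B 0 *ᵥ ((Gram A B T)⁻¹ *ᵥ (NormedSpace.exp (-T • A) *ᵥ x₂ - x₁)))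
      = x₁) ∧
    (NormedSpace.exp (T • A) *ᵥ
        (x₁ + Gram A B T *ᵥ ((Gram A B T)⁻¹ *ᵥ (NormedSpace.exp (-T • A) *ᵥ x₂ - x₁)))
      = x₂) ∧
    (∀ q : Fin n → ℝ, NormedSpace.exp (T • A) *ᵥ (x₁ + Gram A B T *ᵥ q) = x₂ →
      q = (Gram A B T)⁻¹ *ᵥ (NormedSpace.exp (-T • A) *ᵥ x₂ - x₁)) := by
  have hpd := gram_posdef A B hKalman T hT
  have hdet : IsUnit (Gram A B T).det := (Matrix.isUnit_iff_isUnit_det _).1 hpd.isUnit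
  have hGinv : Gram A B T * (Gram A B T)⁻¹ = 1 := Matrix.mul_nonsing_inv _ hdet
  have hGinv' : (Gram A B T)⁻¹ * Gram A B T = 1 := Matrix.nonsing_inv_mul _ hdet
  have hcomm : Commute (T • A) (-T • A) := by
    rw [neg_smul]
    exact (Commute.refl (T • A)).neg_right
  have hE1 : NormedSpace.exp (T • A) * NormedSpace.exp (-T • A) = 1 := by
    rw [← Matrix.exp_add_of_commute _ _ hcomm, neg_smul, add_neg_cancel, NormedSpace.exp_zero]
  have hE2 : NormedSpace.exp (-T • A) * NormedSpace.exp (T • A) = 1 := by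
    rw [← Matrix.exp_add_of_commute _ _ hcomm.symm, neg_smul, neg_add_cancel,
      NormedSpace.exp_zero]
  have hGram0 : Gram A B 0 = 0 := by
    ext i j
    exact intervalIntegral.integral_same
  refine ⟨?_, ?_, ?_⟩
  · rw [hGram0, Matrix.zero_mulVec, add_zero, zero_smul, NormedSpace.exp_zero,
      Matrix.one_mulVec]
  · rw [Matrix.mulVec_mulVec, hGinv, Matrix.one_mulVec,
      show x₁ + (NormedSpace.exp (-T • A) *ᵥ x₂ - x₁) = NormedSpace.exp (-T • A) *ᵥ x₂
        by abel,
      Matrix.mulVec_mulVec, hE1, Matrix.one_mulVec]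
  · intro q hq
    have h1 : x₁ + Gram A B T *ᵥ q = NormedSpace.exp (-T • A) *ᵥ x₂ := by
      have h := congrArg (fun v => NormedSpace.exp (-T • A) *ᵥ v) hq
      simp only [Matrix.mulVec_mulVec] at h
      rwa [hE2, Matrix.one_mulVec] at h
    have h2 : Gram A B T *ᵥ q = NormedSpace.exp (-T • A) *ᵥ x₂ - x₁ := by
      rw [← h1]; abel
    rw [← h2, Matrix.mulVec_mulVec, hGinv', Matrix.one_mulVec]
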